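/- Let H be a Hausdorff field (a subfield of the ring C of germs at +∞ of continuous real-valued functions), let Ĥ be an immediate valued field extension of H (ordered so that the valuation ring of Ĥ is convex), let f, g ∈ C and f̂, ĝ ∈ Ĥ with f ∼_H f̂ and g ∼_H ĝ. Then 1/f ∼_H 1/f̂ and f·g ∼_H f̂·ĝ; moreover f ≼ g in C if and only if f̂ ≼ ĝ in Ĥ, and likewise with ≺, ≍, ∼ in place of ≼. -/

import Mathlib

open Filter

/-- The ring `𝒞` of germs at `+∞` of real-valued functions on `ℝ`. -/
abbrev GermR : Type := Filter.Germ (Filter.atTop : Filter ℝ) ℝ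

/-- `f ≼ g` in `𝒞`: `|f| ≤ c·|g|` eventually, for some real `c > 0`. -/
def Dominates (f g : GermR) : Prop :=
  ∃ F G : ℝ → ℝ, f = (↑F : GermR) ∧ g = (↑G : GermR) ∧
    ∃ c : ℝ, 0 < c ∧ ∀ᶠ t in atTop, |F t| ≤ c * |G t|

/-- `f ≺ g` in `𝒞`: `g` is eventually nonzero (a unit of `𝒞`) and `f/g → 0`. -/
def StrictDominates (f g : GermR) : Prop :=
  ∃ F G : ℝ → ℝ, f = (↑F : GermR) ∧ g = (↑G : GermR) ∧
    (∀ᶠ t in atTop, G t ≠ 0) ∧ Tendsto (fun t => F t / G t) atTop (nhds 0)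

/-- `f ∼ g` in `𝒞`: `f − g ≺ g`. -/
def GermSim (f g : GermR) : Prop := StrictDominates (f - g) g

/-- `H` is a Hausdorff field: a subring of `𝒞` consisting of germs of continuous
functions which is a field. -/
def IsHausdorffField (H : Subring GermR) : Prop :=
  (∀ f ∈ H, ∃ F : ℝ → ℝ, f = (↑F : GermR) ∧ ∀ᶠ t in atTop, ContinuousAt F t) ∧
  (∀ f ∈ H, f ≠ 0 → ∃ g ∈ H, f * g = 1)

/-- Dominance `x ≼ y` in a valued field `L` with valuation ring `O`:
`x ∈ y·O`, i.e. `v(x) ≥ v(y)`. -/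
def LPreceq {L : Type*} [Field L] (O : Subring L) (x y : L) : Prop :=
  ∃ c ∈ O, x = c * y

/-- Strict dominance `x ≺ y` in `(L, O)`. -/
def LPrec {L : Type*} [Field L] (O : Subring L) (x y : L) : Prop :=
  LPreceq O x y ∧ ¬ LPreceq O y x

/-- Asymptotic equivalence `x ∼ y` in `(L, O)`: `x − y ≺ y`. -/
def LSim {L : Type*} [Field L] (O : Subring L) (x y : L) : Prop :=
  LPrec O (x - y) y

/-- `f ∈ 𝒞` is asymptotically similar over `H` to `x ∈ L = Ĥ`:
`f ∼ φ` in `𝒞` and `φ ∼ x` in `Ĥ` for some `φ ∈ H`. -/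
def SimH (H : Subring GermR) {L : Type*} [Field L] (O : Subring L)
    (ι : H →+* L) (f : GermR) (x : L) : Prop :=
  ∃ h : H, GermSim f (↑h : GermR) ∧ LSim O x (ι h)


section Lside0
variable {L : Type*} [Field L] {O : Subring L}

/-- `c` is a non-unit of the valuation ring `O`. -/
def OSmall (O : Subring L) (c : L) : Prop := c ∈ O ∧ (c = 0 ∨ c⁻¹ ∉ O)

lemma osmall_zero : OSmall O (0 : L) := ⟨O.zero_mem, Or.inl rfl⟩

lemma osmall_of_ne {c : L} (hc : OSmall O c) (h0 : c ≠ 0) : c⁻¹ ∉ O :=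
  hc.2.resolve_left h0

lemma osmall_unit (hO : ∀ x : L, x ∈ O ∨ x⁻¹ ∈ O) {c : L} (hc : OSmall O c) :
    (1 + c) ≠ 0 ∧ (1 + c)⁻¹ ∈ O := by
  rcases hc.2 with h | h
  · simp [h, O.one_mem]
  have hc0 : c ≠ 0 := by rintro rfl; exact h (by simpa using O.zero_mem)
  have hne : (1 : L) + c ≠ 0 := by
    intro h0
    have : c = -1 := by linear_combination h0
    rw [this] at h; exact h (by rw [inv_neg, inv_one]; exact O.neg_mem O.one_mem)
  refine ⟨hne, ?_⟩
  rcases hO (c * (1 + c)⁻¹) with h1 | h1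
  · have : (1 + c)⁻¹ = 1 - c * (1 + c)⁻¹ := by field_simp; ring
    rw [this]; exact O.sub_mem O.one_mem h1
  · exfalso; apply h
    have hinv : (c * (1 + c)⁻¹)⁻¹ = (1 + c) * c⁻¹ := by
      rw [mul_inv, inv_inv, mul_comm]
    rw [hinv] at h1
    have : c⁻¹ = (1 + c) * c⁻¹ - 1 := by field_simp; ring
    rw [this]; exact O.sub_mem h1 O.one_mem

lemma osmall_add (hO : ∀ x : L, x ∈ O ∨ x⁻¹ ∈ O) {c d : L}
    (hc : OSmall O c) (hd : OSmall O d) : OSmall O (c + d) := by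
  refine ⟨O.add_mem hc.1 hd.1, ?_⟩
  by_cases h0 : c + d = 0
  · exact Or.inl h0
  right; intro hmem
  rcases hc.2 with hc' | hc'
  · subst hc'; rw [zero_add] at hmem h0; exact (osmall_of_ne hd h0) hmem
  rcases hd.2 with hd' | hd'
  · subst hd'; rw [add_zero] at hmem h0; exact hc' hmem
  have hc0 : c ≠ 0 := by rintro rfl; exact hc' (by simpa using O.zero_mem)
  have hd0 : d ≠ 0 := by rintro rfl; exact hd' (by simpa using O.zero_mem)
  rcases hO (c / d) with h1 | h1
  · apply hd'
    have : (1 + c / d) * (c + d)⁻¹ = d⁻¹ := by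
      rw [one_add_div hd0, add_comm d c, div_mul_eq_mul_div, mul_inv_cancel₀ h0, one_div]
    rw [← this]
    exact O.mul_mem (O.add_mem O.one_mem h1) hmem
  · apply hc'
    rw [inv_div] at h1
    have : (1 + d / c) * (c + d)⁻¹ = c⁻¹ := by
      rw [one_add_div hc0, div_mul_eq_mul_div, mul_inv_cancel₀ h0, one_div]
    rw [← this]
    exact O.mul_mem (O.add_mem O.one_mem h1) hmem

lemma osmall_mul_mem {c d : L} (hc : OSmall O c) (hd : d ∈ O) : OSmall O (c * d) := by
  refine ⟨O.mul_mem hc.1 hd, ?_⟩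
  by_cases h0 : c * d = 0
  · exact Or.inl h0
  right; intro hmem
  have hc0 : c ≠ 0 := fun h => h0 (by simp [h])
  apply osmall_of_ne hc hc0
  have hd0 : d ≠ 0 := fun h => h0 (by simp [h])
  have : d * (c * d)⁻¹ = c⁻¹ := by
    rw [mul_inv, mul_comm c⁻¹ d⁻¹, ← mul_assoc, mul_inv_cancel₀ hd0, one_mul]
  rw [← this]; exact O.mul_mem hd hmem

lemma lsim_iff {x y : L} :
    LSim O x y ↔ y ≠ 0 ∧ ∃ c, OSmall O c ∧ x = (1 + c) * y := by
  constructor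
  · rintro ⟨⟨c, hc, hxy⟩, hn⟩
    have hy : y ≠ 0 := by
      rintro rfl
      exact hn ⟨0, O.zero_mem, by simpa using hxy⟩
    refine ⟨hy, c, ⟨hc, ?_⟩, by linear_combination hxy⟩
    by_cases h0 : c = 0
    · exact Or.inl h0
    right; intro hmem
    exact hn ⟨c⁻¹, hmem, by rw [hxy]; field_simp⟩
  · rintro ⟨hy, c, hc, hx⟩
    refine ⟨⟨c, hc.1, by rw [hx]; ring⟩, ?_⟩
    rintro ⟨d, hd, hyd⟩
    have hxc : x - y = c * y := by rw [hx]; ring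
    rw [hxc] at hyd
    have hc0 : c ≠ 0 := by rintro rfl; simp at hyd; exact hy hyd
    apply osmall_of_ne hc hc0
    have h1 : d * c * y = 1 * y := by linear_combination -hyd
    have hdc : d * c = 1 := mul_right_cancel₀ hy h1
    rw [← eq_inv_of_mul_eq_one_left hdc]
    exact hd

lemma lsim_unit (hO : ∀ x : L, x ∈ O ∨ x⁻¹ ∈ O) {x y : L} (h : LSim O x y) :
    ∃ u : L, u ∈ O ∧ u⁻¹ ∈ O ∧ u ≠ 0 ∧ x = u * y ∧ y ≠ 0 ∧ x ≠ 0 := by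
  obtain ⟨hy, c, hc, hx⟩ := lsim_iff.1 h
  obtain ⟨hu0, hui⟩ := osmall_unit hO hc
  exact ⟨1 + c, O.add_mem O.one_mem hc.1, hui, hu0, hx, hy,
    by rw [hx]; exact mul_ne_zero hu0 hy⟩

lemma lpreceq_congr_left (hO : ∀ x : L, x ∈ O ∨ x⁻¹ ∈ O) {x y : L} (h : LSim O x y)
    (z : L) : LPreceq O x z ↔ LPreceq O y z := by
  obtain ⟨u, huO, huiO, hu0, hx, hy, hx0⟩ := lsim_unit hO h
  constructor
  · rintro ⟨c, hc, hxz⟩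
    exact ⟨u⁻¹ * c, O.mul_mem huiO hc, by
      field_simp [hu0]
      linear_combination hxz - hx⟩
  · rintro ⟨c, hc, hyz⟩
    exact ⟨u * c, O.mul_mem huO hc, by rw [hx, hyz]; ring⟩

lemma lpreceq_congr_right (hO : ∀ x : L, x ∈ O ∨ x⁻¹ ∈ O) {x y : L} (h : LSim O x y)
    (z : L) : LPreceq O z x ↔ LPreceq O z y := by
  obtain ⟨u, huO, huiO, hu0, hx, hy, hx0⟩ := lsim_unit hO h
  constructor
  · rintro ⟨c, hc, hzx⟩
    exact ⟨c * u, O.mul_mem hc huO, by rw [hzx, hx]; ring⟩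
  · rintro ⟨c, hc, hzy⟩
    exact ⟨c * u⁻¹, O.mul_mem hc huiO, by
      rw [hzy, hx]
      field_simp [hu0]⟩

lemma osmall_shift (hO : ∀ x : L, x ∈ O ∨ x⁻¹ ∈ O) {c : L} (hc : OSmall O c) :
    OSmall O (-(c * (1 + c)⁻¹)) ∧ (1 : L) + -(c * (1 + c)⁻¹) = (1 + c)⁻¹ := by
  obtain ⟨hu0, hui⟩ := osmall_unit hO hc
  refine ⟨?_, by field_simp; ring⟩
  have := osmall_mul_mem hc hui
  exact ⟨O.neg_mem this.1, by
    rcases this.2 with h | h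
    · exact Or.inl (by simp [h])
    · right; rw [inv_neg]; intro hm; exact h (by simpa using O.neg_mem hm)⟩

lemma lsim_symm (hO : ∀ x : L, x ∈ O ∨ x⁻¹ ∈ O) {x y : L} (h : LSim O x y) :
    LSim O y x := by
  obtain ⟨hy, c, hc, hx⟩ := lsim_iff.1 h
  obtain ⟨hu0, hui⟩ := osmall_unit hO hc
  obtain ⟨hc', he⟩ := osmall_shift hO hc
  refine lsim_iff.2 ⟨by rw [hx]; exact mul_ne_zero hu0 hy, _, hc', ?_⟩
  rw [he, hx]
  field_simp

lemma lsim_trans (hO : ∀ x : L, x ∈ O ∨ x⁻¹ ∈ O) {x y z : L} (h1 : LSim O x y)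
    (h2 : LSim O y z) : LSim O x z := by
  obtain ⟨hy, c, hc, hx⟩ := lsim_iff.1 h1
  obtain ⟨hz, d, hd, hyz⟩ := lsim_iff.1 h2
  refine lsim_iff.2 ⟨hz, c + d + c * d,
    osmall_add hO (osmall_add hO hc hd) (osmall_mul_mem hc hd.1), ?_⟩
  rw [hx, hyz]; ring

lemma lsim_mul (hO : ∀ x : L, x ∈ O ∨ x⁻¹ ∈ O) {x y x' y' : L} (h1 : LSim O x y)
    (h2 : LSim O x' y') : LSim O (x * x') (y * y') := by
  obtain ⟨hy, c, hc, hx⟩ := lsim_iff.1 h1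
  obtain ⟨hy', d, hd, hx'⟩ := lsim_iff.1 h2
  refine lsim_iff.2 ⟨mul_ne_zero hy hy', c + d + c * d,
    osmall_add hO (osmall_add hO hc hd) (osmall_mul_mem hc hd.1), ?_⟩
  rw [hx, hx']; ring

lemma lsim_inv (hO : ∀ x : L, x ∈ O ∨ x⁻¹ ∈ O) {x y : L} (h : LSim O x y) :
    LSim O x⁻¹ y⁻¹ := by
  obtain ⟨hy, c, hc, hx⟩ := lsim_iff.1 h
  obtain ⟨hu0, hui⟩ := osmall_unit hO hc
  obtain ⟨hc', he⟩ := osmall_shift hO hc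
  refine lsim_iff.2 ⟨inv_ne_zero hy, _, hc', ?_⟩
  rw [he, hx, mul_inv]

end Lside0

section Cside
open Filter

/-- `Φ` is eventually nonzero and `F/Φ → 1`. -/
def Ratio1 (F Φ : ℝ → ℝ) : Prop :=
  (∀ᶠ t in atTop, Φ t ≠ 0) ∧ Tendsto (fun t => F t / Φ t) atTop (nhds 1)

lemma ratio1_facts {F Φ : ℝ → ℝ} (h : Ratio1 F Φ) :
    ∀ᶠ t in atTop, F t ≠ 0 ∧ |F t| ≤ 2 * |Φ t| ∧ |Φ t| ≤ 2 * |F t| := by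
  have hm : ∀ᶠ t in atTop, F t / Φ t ∈ Set.Ioo (1/2 : ℝ) 2 :=
    h.2 (Ioo_mem_nhds (by norm_num) (by norm_num))
  filter_upwards [h.1, hm] with t hΦ hr
  obtain ⟨h1, h2⟩ := hr
  have hΦ' : 0 < |Φ t| := abs_pos.2 hΦ
  have hF : F t ≠ 0 := by
    intro h0; rw [h0, zero_div] at h1; norm_num at h1
  have habs : |F t / Φ t| = |F t| / |Φ t| := abs_div _ _
  have hle : |F t / Φ t| ≤ 2 := by
    rw [abs_le]; constructor <;> nlinarith
  have hge : (1/2 : ℝ) ≤ |F t / Φ t| := le_abs_self _ |>.trans' (le_of_lt h1)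
  rw [habs] at hle hge
  refine ⟨hF, ?_, ?_⟩
  · rw [div_le_iff₀ hΦ'] at hle; linarith
  · rw [le_div_iff₀ hΦ'] at hge; linarith

lemma ratio1_symm {F Φ : ℝ → ℝ} (h : Ratio1 F Φ) : Ratio1 Φ F := by
  refine ⟨(ratio1_facts h).mono fun t ht => ht.1, ?_⟩
  have : Tendsto (fun t => (F t / Φ t)⁻¹) atTop (nhds 1) := by
    simpa using h.2.inv₀ one_ne_zero
  refine this.congr' ?_
  filter_upwards [h.1, (ratio1_facts h).mono fun t ht => ht.1] with t hΦ hF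
  rw [inv_div]

lemma ratio_congr {F Φ G Ψ : ℝ → ℝ} (h1 : Ratio1 F Φ) (h2 : Ratio1 G Ψ) {a : ℝ}
    (h : Tendsto (fun t => F t / G t) atTop (nhds a)) :
    Tendsto (fun t => Φ t / Ψ t) atTop (nhds a) := by
  have hlim : Tendsto (fun t => Φ t / F t * (F t / G t) * (G t / Ψ t)) atTop
      (nhds (1 * a * 1)) := ((ratio1_symm h1).2.mul h).mul h2.2
  rw [one_mul, mul_one] at hlim
  refine hlim.congr' ?_
  filter_upwards [h1.1, h2.1, (ratio1_facts h1).mono fun t ht => ht.1,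
    (ratio1_facts h2).mono fun t ht => ht.1] with t hΦ hΨ hF hG
  field_simp

lemma dominates_iff {F G : ℝ → ℝ} :
    Dominates ↑F ↑G ↔ ∃ c : ℝ, 0 < c ∧ ∀ᶠ t in atTop, |F t| ≤ c * |G t| := by
  constructor
  · rintro ⟨F', G', hF, hG, c, hc, h⟩
    have hF' : F =ᶠ[atTop] F' := Germ.coe_eq.1 hF
    have hG' : G =ᶠ[atTop] G' := Germ.coe_eq.1 hG
    refine ⟨c, hc, ?_⟩
    filter_upwards [h, hF', hG'] with t ht h1 h2
    rw [h1, h2]; exact ht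
  · rintro ⟨c, hc, h⟩
    exact ⟨F, G, rfl, rfl, c, hc, h⟩

lemma strict_iff {F G : ℝ → ℝ} :
    StrictDominates ↑F ↑G ↔
      (∀ᶠ t in atTop, G t ≠ 0) ∧ Tendsto (fun t => F t / G t) atTop (nhds 0) := by
  constructor
  · rintro ⟨F', G', hF, hG, hnz, h⟩
    have hF' : F =ᶠ[atTop] F' := Germ.coe_eq.1 hF
    have hG' : G =ᶠ[atTop] G' := Germ.coe_eq.1 hG
    constructor
    · filter_upwards [hnz, hG'] with t ht h2; rw [h2]; exact ht
    · refine h.congr' ?_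
      filter_upwards [hF', hG'] with t h1 h2
      rw [h1, h2]
  · rintro ⟨hnz, h⟩
    exact ⟨F, G, rfl, rfl, hnz, h⟩

lemma germsim_iff {F G : ℝ → ℝ} :
    GermSim ↑F ↑G ↔
      (∀ᶠ t in atTop, G t ≠ 0) ∧ Tendsto (fun t => F t / G t) atTop (nhds 1) := by
  unfold GermSim
  rw [← Germ.coe_sub, strict_iff]
  constructor
  · rintro ⟨hnz, h⟩
    refine ⟨hnz, ?_⟩
    have : Tendsto (fun t => (F - G) t / G t + 1) atTop (nhds (0 + 1)) :=
      h.add tendsto_const_nhds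
    rw [zero_add] at this
    refine this.congr' ?_
    filter_upwards [hnz] with t ht
    simp only [Pi.sub_apply]
    field_simp
    ring
  · rintro ⟨hnz, h⟩
    refine ⟨hnz, ?_⟩
    have : Tendsto (fun t => F t / G t - 1) atTop (nhds (1 - 1)) :=
      h.sub tendsto_const_nhds
    rw [sub_self] at this
    refine this.congr' ?_
    filter_upwards [hnz] with t ht
    simp only [Pi.sub_apply]
    field_simp

lemma germsim_reps {f φ : GermR} (h : GermSim f φ) :
    ∃ F Φ : ℝ → ℝ, f = ↑F ∧ φ = ↑Φ ∧ Ratio1 F Φ := by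
  obtain ⟨F₀, Φ, hF₀, hΦ, hnz, hlim⟩ := h
  refine ⟨F₀ + Φ, Φ, ?_, hΦ, hnz, ?_⟩
  · have : f = (f - φ) + φ := by ring
    rw [this, hF₀, hΦ, ← Germ.coe_add]
  · have : Tendsto (fun t => F₀ t / Φ t + 1) atTop (nhds (0 + 1)) :=
      hlim.add tendsto_const_nhds
    rw [zero_add] at this
    refine this.congr' ?_
    filter_upwards [hnz] with t ht
    simp only [Pi.add_apply]
    field_simp

lemma dom_congr {F Φ G Ψ : ℝ → ℝ} (h1 : Ratio1 F Φ) (h2 : Ratio1 G Ψ)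
    {c : ℝ} (hc : 0 < c) (h : ∀ᶠ t in atTop, |F t| ≤ c * |G t|) :
    ∃ c' : ℝ, 0 < c' ∧ ∀ᶠ t in atTop, |Φ t| ≤ c' * |Ψ t| := by
  refine ⟨4 * c, by linarith, ?_⟩
  filter_upwards [h, (ratio1_facts h1).mono fun t ht => ht.2.2,
    (ratio1_facts h2).mono fun t ht => ht.2.1] with t ht hΦF hGΨ
  calc |Φ t| ≤ 2 * |F t| := hΦF
    _ ≤ 2 * (c * |G t|) := by linarith
    _ ≤ 2 * (c * (2 * |Ψ t|)) := by nlinarith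
    _ = 4 * c * |Ψ t| := by ring

end Cside


section Hside
open Filter

lemma sign_const {W : ℝ → ℝ} (hc : ∀ᶠ t in atTop, ContinuousAt W t)
    (hnz : ∀ᶠ t in atTop, W t ≠ 0) :
    (∀ᶠ t in atTop, 0 < W t) ∨ (∀ᶠ t in atTop, W t < 0) := by
  obtain ⟨a, ha⟩ := eventually_atTop.1 (hc.and hnz)
  by_contra hcon
  push_neg at hcon
  obtain ⟨h1, h2⟩ := hcon
  obtain ⟨s, hs, hWs⟩ := (frequently_atTop.1 (not_eventually.1 h1)) a
  obtain ⟨r, hr, hWr⟩ := (frequently_atTop.1 (not_eventually.1 h2)) a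
  push_neg at hWs hWr
  have hWs' : W s < 0 := lt_of_le_of_ne hWs (ha s hs).2
  have hWr' : 0 < W r := lt_of_le_of_ne (by simpa using hWr) (Ne.symm (ha r hr).2)
  have hcont : ContinuousOn W (Set.uIcc s r) := by
    intro x hx
    have hax : a ≤ x := by
      rcases Set.mem_uIcc.1 hx with ⟨h', _⟩ | ⟨h', _⟩
      · exact le_trans hs h'
      · exact le_trans hr h'
    exact (ha x hax).1.continuousWithinAt
  have h0 : (0:ℝ) ∈ Set.uIcc (W s) (W r) :=
    Set.mem_uIcc.2 (Or.inl ⟨le_of_lt hWs', le_of_lt hWr'⟩)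
  obtain ⟨c, hcmem, hWc⟩ := intermediate_value_uIcc hcont h0
  have hac : a ≤ c := by
    rcases Set.mem_uIcc.1 hcmem with ⟨h', _⟩ | ⟨h', _⟩
    · exact le_trans hs h'
    · exact le_trans hr h'
  exact (ha c hac).2 hWc

lemma germ_inv_exists {H : Subring GermR} (hH : IsHausdorffField H) (h : H)
    (h0 : (↑h : GermR) ≠ 0) : ∃ k : H, h * k = 1 := by
  obtain ⟨g, hgH, hg⟩ := hH.2 ↑h h.2 h0
  exact ⟨⟨g, hgH⟩, Subtype.ext hg⟩

lemma germ_ne_of_unit {X Y : ℝ → ℝ} (h : (↑X : GermR) * ↑Y = 1) :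
    ∀ᶠ t in atTop, X t ≠ 0 := by
  rw [← Germ.coe_mul, ← Germ.coe_one, Germ.coe_eq] at h
  filter_upwards [h] with t ht
  intro h0
  rw [Pi.mul_apply, Pi.one_apply, h0, zero_mul] at ht
  exact absurd ht (by norm_num)

lemma germ_exists_rep (x : GermR) : ∃ F : ℝ → ℝ, x = ↑F := by
  induction x using Germ.inductionOn with | h F => exact ⟨F, rfl⟩

lemma tendsto_zero_of_not_dom {H : Subring GermR} (hH : IsHausdorffField H)
    (u : H) {U : ℝ → ℝ} (hU : (↑u : GermR) = ↑U)
    (hnd : ¬ Dominates 1 (↑u : GermR)) : Tendsto U atTop (nhds 0) := by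
  rw [Metric.tendsto_atTop]
  intro ε hε
  obtain ⟨n, hn⟩ := exists_nat_gt ((ε⁻¹)^2)
  have hε2 : (0:ℝ) < ε^2 := by positivity
  have hn' : 1 < (n:ℝ) * ε^2 := by
    rw [inv_pow, ← one_div] at hn
    exact (div_lt_iff₀ hε2).1 hn
  set w : H := ((n:H)+1) * (u * u) - 1 with hw
  set W : ℝ → ℝ := fun t => ((n:ℝ)+1) * (U t * U t) - 1 with hWdef
  have hwgerm : (↑w : GermR) = ↑W := by
    have h1 : (↑w : GermR) = ((n:GermR)+1) * ((↑U : GermR) * ↑U) - 1 := by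
      push_cast [hw, hU]
      ring
    rw [h1]; rfl
  have hs2 : Real.sqrt ((n:ℝ)+1) ^ 2 = (n:ℝ)+1 := Real.sq_sqrt (by positivity)
  have hspos : 0 < Real.sqrt ((n:ℝ)+1) := Real.sqrt_pos.2 (by positivity)
  -- helper to derive the contradiction `1 ≼ u` when `(n+1)U² ≥ 1` eventually
  have hdom : ∀ᶠ t in atTop, 1 ≤ ((n:ℝ)+1) * (U t * U t) → False → True := by
    filter_upwards with t _ _; trivial
  by_cases hw0 : (↑w : GermR) = 0
  · exfalso; apply hnd
    have he : W =ᶠ[atTop] (0 : ℝ → ℝ) :=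
      Germ.coe_eq.1 (by rw [← hwgerm, hw0, Germ.coe_zero])
    refine ⟨(fun _ => 1), U, Germ.coe_one.symm, hU, Real.sqrt ((n:ℝ)+1), hspos, ?_⟩
    filter_upwards [he] with t ht
    have h1 : ((n:ℝ)+1) * (U t * U t) = 1 := by
      have := ht
      simp only [hWdef, Pi.zero_apply] at this
      linarith [this]
    rw [abs_one]
    have key : (Real.sqrt ((n:ℝ)+1) * |U t|)^2 = 1 := by
      rw [mul_pow, hs2, sq_abs]; nlinarith [h1]
    have hx : 0 ≤ Real.sqrt ((n:ℝ)+1) * |U t| :=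
      mul_nonneg (Real.sqrt_nonneg _) (abs_nonneg _)
    nlinarith [key, hx]
  · obtain ⟨k, hk⟩ := germ_inv_exists hH w hw0
    obtain ⟨Wc, hWc, hWcont⟩ := hH.1 ↑w w.2
    have hWeq : Wc =ᶠ[atTop] W := by
      rw [← Germ.coe_eq, ← hWc, hwgerm]
    obtain ⟨K, hK⟩ := germ_exists_rep ↑k
    have hprod : (↑Wc : GermR) * ↑K = 1 := by
      rw [← hWc, ← hK]
      exact_mod_cast congrArg (Subtype.val) hk
    have hnzW : ∀ᶠ t in atTop, Wc t ≠ 0 := germ_ne_of_unit hprod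
    rcases sign_const hWcont hnzW with hpos | hneg
    · exfalso; apply hnd
      refine ⟨(fun _ => 1), U, Germ.coe_one.symm, hU, Real.sqrt ((n:ℝ)+1), hspos, ?_⟩
      filter_upwards [hpos, hWeq] with t ht hteq
      rw [hteq] at ht
      have h1 : 1 < ((n:ℝ)+1) * (U t * U t) := by
        simp only [hWdef] at ht
        linarith
      rw [abs_one]
      have key : 1 < (Real.sqrt ((n:ℝ)+1) * |U t|)^2 := by
        rw [mul_pow, hs2, sq_abs]; nlinarith [h1]
      have hx : 0 ≤ Real.sqrt ((n:ℝ)+1) * |U t| :=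
        mul_nonneg (Real.sqrt_nonneg _) (abs_nonneg _)
      nlinarith [key, hx]
    · obtain ⟨a, ha⟩ := eventually_atTop.1 (hneg.and hWeq)
      refine ⟨a, fun t ht => ?_⟩
      obtain ⟨h1, h2⟩ := ha t ht
      rw [h2] at h1
      simp only [hWdef] at h1
      rw [Real.dist_eq, sub_zero]
      nlinarith [sq_abs (U t), abs_nonneg (U t)]

end Hside


section Bridge
open Filter
variable {H : Subring GermR} {L : Type*} [Field L] {O : Subring L}

lemma germ_prod_one {X Y : ℝ → ℝ} (h : (↑X : GermR) * ↑Y = 1) :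
    ∀ᶠ t in atTop, X t * Y t = 1 := by
  rw [← Germ.coe_mul, ← Germ.coe_one, Germ.coe_eq] at h
  filter_upwards [h] with t ht
  simpa using ht

lemma abs_le_iff_of_prod_one {a b b' : ℝ} (h : b * b' = 1) (c : ℝ) :
    |a| ≤ c * |b| ↔ |a * b'| ≤ c := by
  have hb : b ≠ 0 := by rintro rfl; simp at h
  have hb' : |b| * |b'| = 1 := by rw [← abs_mul, h, abs_one]
  have hbpos : 0 < |b| := abs_pos.2 hb
  constructor
  · intro h1
    calc |a * b'| = |a| * |b'| := abs_mul a b'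
      _ ≤ c * |b| * |b'| := mul_le_mul_of_nonneg_right h1 (abs_nonneg b')
      _ = c * (|b| * |b'|) := by ring
      _ = c := by rw [hb']; ring
  · intro h1
    have h2 : a * b' * b = a := by
      rw [mul_assoc, mul_comm b' b, h, mul_one]
    calc |a| = |a * b' * b| := by rw [h2]
      _ = |a * b'| * |b| := abs_mul _ _
      _ ≤ c * |b| := mul_le_mul_of_nonneg_right h1 (le_of_lt hbpos)

lemma one_le_iff_of_prod_one {a b b' : ℝ} (h : b * b' = 1) (c : ℝ) :
    |b| ≤ c * |a| ↔ 1 ≤ c * |a * b'| := by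
  have hb : b ≠ 0 := by rintro rfl; simp at h
  have hb' : |b| * |b'| = 1 := by rw [← abs_mul, h, abs_one]
  have hbpos : 0 < |b| := abs_pos.2 hb
  constructor
  · intro h1
    calc (1:ℝ) = |b| * |b'| := hb'.symm
      _ ≤ c * |a| * |b'| := mul_le_mul_of_nonneg_right h1 (abs_nonneg b')
      _ = c * (|a| * |b'|) := by ring
      _ = c * |a * b'| := by rw [abs_mul]
  · intro h1
    calc |b| = 1 * |b| := (one_mul _).symm
      _ ≤ c * |a * b'| * |b| := mul_le_mul_of_nonneg_right h1 (le_of_lt hbpos)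
      _ = c * (|a| * (|b'| * |b|)) := by rw [abs_mul]; ring
      _ = c * |a| := by rw [mul_comm |b'| |b|, hb', mul_one]

lemma coeH_mul (a b : H) : ((a * b : H) : GermR) = (↑a : GermR) * ↑b := rfl
lemma coeH_ne_zero {a : H} (h : a ≠ 0) : (↑a : GermR) ≠ 0 :=
  fun e => h (Subtype.ext e)

lemma bridge_dom (hH : IsHausdorffField H)
    (ι : H →+* L) (hι : Function.Injective ι)
    (hcompat : ∀ h : H, ι h ∈ O ↔ Dominates (↑h : GermR) 1)
    (h k : H) (hk0 : (↑k : GermR) ≠ 0) :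
    Dominates ↑h ↑k ↔ LPreceq O (ι h) (ι k) := by
  obtain ⟨k', hkk'⟩ := germ_inv_exists hH k hk0
  obtain ⟨Fh, hFh⟩ := germ_exists_rep ↑h
  obtain ⟨Fk, hFk⟩ := germ_exists_rep ↑k
  obtain ⟨Fk', hFk'⟩ := germ_exists_rep ↑k'
  have hprod : (↑Fk : GermR) * ↑Fk' = 1 := by
    rw [← hFk, ← hFk', ← coeH_mul, hkk']; rfl
  have hprodev := germ_prod_one hprod
  have hu : ((h * k' : H) : GermR) = ↑(fun t => Fh t * Fk' t) := by
    rw [coeH_mul, hFh, hFk', ← Germ.coe_mul]; rfl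
  have hhk : h * k' * k = h := by
    have : k' * k = 1 := by rw [mul_comm]; exact hkk'
    rw [mul_assoc, this, mul_one]
  have c1 : Dominates (↑h : GermR) ↑k ↔ Dominates (↑(h * k') : GermR) 1 := by
    rw [hFh, hFk, hu, ← Germ.coe_one, dominates_iff, dominates_iff]
    constructor
    · rintro ⟨c, hc, hev⟩
      refine ⟨c, hc, ?_⟩
      filter_upwards [hev, hprodev] with t ht hp
      have := (abs_le_iff_of_prod_one hp c).1 ht
      simpa using this
    · rintro ⟨c, hc, hev⟩
      refine ⟨c, hc, ?_⟩
      filter_upwards [hev, hprodev] with t ht hp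
      refine (abs_le_iff_of_prod_one hp c).2 ?_
      simpa using ht
  rw [c1, ← hcompat (h * k')]
  constructor
  · intro hm
    refine ⟨ι (h * k'), hm, ?_⟩
    rw [← map_mul, hhk]
  · rintro ⟨c, hc, heq⟩
    have hιk : ι k ≠ 0 := by
      intro e
      exact hk0 (by rw [show k = 0 from hι (by rw [e, map_zero])]; rfl)
    have h2 : ι (h * k') * ι k = c * ι k := by
      rw [← map_mul, hhk, heq]
    rw [mul_right_cancel₀ hιk h2]
    exact hc

lemma bridge_notdom (hH : IsHausdorffField H)
    (ι : H →+* L) (hι : Function.Injective ι)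
    (hcompat : ∀ h : H, ι h ∈ O ↔ Dominates (↑h : GermR) 1)
    (h k : H) (hk0 : (↑k : GermR) ≠ 0) (hh0 : (↑h : GermR) ≠ 0) :
    Dominates ↑k ↑h ↔ LPreceq O (ι k) (ι h) :=
  bridge_dom hH ι hι hcompat k h hh0

lemma bridge_strict (hH : IsHausdorffField H)
    (ι : H →+* L) (hι : Function.Injective ι)
    (hcompat : ∀ h : H, ι h ∈ O ↔ Dominates (↑h : GermR) 1)
    (h k : H) (hk0 : (↑k : GermR) ≠ 0) (hh0 : (↑h : GermR) ≠ 0) :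
    StrictDominates ↑h ↑k ↔ LPrec O (ι h) (ι k) := by
  obtain ⟨k', hkk'⟩ := germ_inv_exists hH k hk0
  obtain ⟨Fh, hFh⟩ := germ_exists_rep ↑h
  obtain ⟨Fk, hFk⟩ := germ_exists_rep ↑k
  obtain ⟨Fk', hFk'⟩ := germ_exists_rep ↑k'
  have hprod : (↑Fk : GermR) * ↑Fk' = 1 := by
    rw [← hFk, ← hFk', ← coeH_mul, hkk']; rfl
  have hprodev := germ_prod_one hprod
  have hnzk : ∀ᶠ t in atTop, Fk t ≠ 0 := by
    filter_upwards [hprodev] with t ht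
    intro e; rw [e, zero_mul] at ht; exact absurd ht (by norm_num)
  have hu : ((h * k' : H) : GermR) = ↑(fun t => Fh t * Fk' t) := by
    rw [coeH_mul, hFh, hFk', ← Germ.coe_mul]; rfl
  constructor
  · intro hsd
    rw [hFh, hFk, strict_iff] at hsd
    obtain ⟨hnz, hlim⟩ := hsd
    have hd : Dominates (↑h : GermR) ↑k := by
      rw [hFh, hFk, dominates_iff]
      refine ⟨1, one_pos, ?_⟩
      have hev : ∀ᶠ t in atTop, |Fh t| / |Fk t| < 1 := by
        have := hlim (Metric.ball_mem_nhds 0 one_pos)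
        filter_upwards [this] with t ht
        simpa [Real.dist_eq, abs_div] using ht
      filter_upwards [hev, hnz] with t ht hFkt
      rw [div_lt_one (abs_pos.2 hFkt)] at ht
      linarith
    have hnd : ¬ Dominates (↑k : GermR) ↑h := by
      rintro hdkh
      rw [hFk, hFh, dominates_iff] at hdkh
      obtain ⟨c, hc, hev⟩ := hdkh
      have hev2 : ∀ᶠ t in atTop, |Fh t| / |Fk t| < c⁻¹ := by
        have := hlim (Metric.ball_mem_nhds 0 (show (0:ℝ) < c⁻¹ by positivity))
        filter_upwards [this] with t ht
        simpa [Real.dist_eq, abs_div] using ht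
      obtain ⟨t, h1, h2, h3⟩ := (hev.and (hev2.and hnz)).exists
      have h4 : 0 < |Fk t| := abs_pos.2 h3
      rw [div_lt_iff₀ h4] at h2
      have h5 : c * c⁻¹ = 1 := mul_inv_cancel₀ (ne_of_gt hc)
      nlinarith
    exact ⟨(bridge_dom hH ι hι hcompat h k hk0).1 hd,
      fun hp => hnd ((bridge_dom hH ι hι hcompat k h hh0).2 hp)⟩
  · rintro ⟨hp, hnp⟩
    have hnd : ¬ Dominates (↑k : GermR) ↑h :=
      fun d => hnp ((bridge_dom hH ι hι hcompat k h hh0).1 d)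
    have hnotdom : ¬ Dominates 1 ((h * k' : H) : GermR) := by
      intro hdd
      apply hnd
      rw [hu, ← Germ.coe_one, dominates_iff] at hdd
      obtain ⟨c, hc, hev⟩ := hdd
      rw [hFk, hFh, dominates_iff]
      refine ⟨c, hc, ?_⟩
      filter_upwards [hev, hprodev] with t ht hpr
      refine (one_le_iff_of_prod_one hpr c).2 ?_
      simpa using ht
    have hlim0 : Tendsto (fun t => Fh t * Fk' t) atTop (nhds 0) :=
      tendsto_zero_of_not_dom hH (h * k') hu hnotdom
    rw [hFh, hFk, strict_iff]
    refine ⟨hnzk, hlim0.congr' ?_⟩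
    filter_upwards [hprodev, hnzk] with t ht hkt
    rw [eq_div_iff hkt]
    linear_combination (Fh t) * ht

end Bridge


section Main
open Filter
variable {H : Subring GermR} {L : Type*} [Field L] {O : Subring L}

lemma transfer (hH : IsHausdorffField H) (hO : ∀ x : L, x ∈ O ∨ x⁻¹ ∈ O)
    (ι : H →+* L) (hι : Function.Injective ι)
    (hcompat : ∀ h : H, ι h ∈ O ↔ Dominates (↑h : GermR) 1)
    (f g : GermR) (fh gh : L) (hf : SimH H O ι f fh) (hg : SimH H O ι g gh) :
    (Dominates f g ↔ LPreceq O fh gh) ∧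
    (StrictDominates f g ↔ LPrec O fh gh) ∧
    (GermSim f g ↔ LSim O fh gh) := by
  obtain ⟨φ, hfφ, hfL⟩ := hf
  obtain ⟨ψ, hgψ, hgL⟩ := hg
  obtain ⟨F, Φ, hF, hΦ, hr1⟩ := germsim_reps hfφ
  obtain ⟨G, Ψ, hG, hΨ, hr2⟩ := germsim_reps hgψ
  have hφ0 : (↑φ : GermR) ≠ 0 := by
    intro e
    exact (lsim_iff.1 hfL).1 (by rw [show φ = 0 from Subtype.ext e, map_zero])
  have hψ0 : (↑ψ : GermR) ≠ 0 := by
    intro e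
    exact (lsim_iff.1 hgL).1 (by rw [show ψ = 0 from Subtype.ext e, map_zero])
  -- LPreceq congruences
  have hPre : LPreceq O fh gh ↔ LPreceq O (ι φ) (ι ψ) :=
    (lpreceq_congr_left hO hfL gh).trans (lpreceq_congr_right hO hgL (ι φ))
  have hPre' : LPreceq O gh fh ↔ LPreceq O (ι ψ) (ι φ) :=
    (lpreceq_congr_left hO hgL fh).trans (lpreceq_congr_right hO hfL (ι ψ))
  -- Dominates transfer to H
  have hDom : Dominates f g ↔ Dominates (↑φ : GermR) ↑ψ := by
    rw [hF, hG, hΦ, hΨ, dominates_iff, dominates_iff]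
    constructor
    · rintro ⟨c, hc, hev⟩; exact dom_congr hr1 hr2 hc hev
    · rintro ⟨c, hc, hev⟩; exact dom_congr (ratio1_symm hr1) (ratio1_symm hr2) hc hev
  have hGnz : ∀ᶠ t in atTop, G t ≠ 0 := (ratio1_facts hr2).mono fun t ht => ht.1
  have hStrict : StrictDominates f g ↔ StrictDominates (↑φ : GermR) ↑ψ := by
    rw [hF, hG, hΦ, hΨ, strict_iff, strict_iff]
    constructor
    · rintro ⟨_, hlim⟩; exact ⟨hr2.1, ratio_congr hr1 hr2 hlim⟩
    · rintro ⟨_, hlim⟩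
      exact ⟨hGnz, ratio_congr (ratio1_symm hr1) (ratio1_symm hr2) hlim⟩
  have hSim : GermSim f g ↔ GermSim (↑φ : GermR) ↑ψ := by
    rw [hF, hG, hΦ, hΨ, germsim_iff, germsim_iff]
    constructor
    · rintro ⟨_, hlim⟩; exact ⟨hr2.1, ratio_congr hr1 hr2 hlim⟩
    · rintro ⟨_, hlim⟩
      exact ⟨hGnz, ratio_congr (ratio1_symm hr1) (ratio1_symm hr2) hlim⟩
  -- the three equivalences
  refine ⟨hDom.trans ((bridge_dom hH ι hι hcompat φ ψ hψ0).trans hPre.symm), ?_, ?_⟩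
  · rw [hStrict, bridge_strict hH ι hι hcompat φ ψ hψ0 hφ0]
    exact and_congr hPre.symm (not_congr hPre'.symm)
  · rw [hSim]
    have hLs : LSim O fh gh ↔ LSim O (ι φ) (ι ψ) := by
      constructor
      · intro hsim
        exact lsim_trans hO (lsim_trans hO (lsim_symm hO hfL) hsim) hgL
      · intro hsim
        exact lsim_trans hO (lsim_trans hO hfL hsim) (lsim_symm hO hgL)
    rw [hLs]
    by_cases hφψ : φ = ψ
    · subst hφψ
      refine iff_of_true ?_ ?_
      · rw [hΦ, germsim_iff]
        refine ⟨hr1.1, ?_⟩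
        refine tendsto_const_nhds.congr' ?_
        filter_upwards [hr1.1] with t ht
        exact (div_self ht).symm
      · exact lsim_iff.2 ⟨(lsim_iff.1 hfL).1, 0, osmall_zero, by ring⟩
    · have hd0 : ((φ - ψ : H) : GermR) ≠ 0 := coeH_ne_zero (sub_ne_zero.2 hφψ)
      have hsub : (↑φ : GermR) - ↑ψ = ((φ - ψ : H) : GermR) := by push_cast; ring
      rw [GermSim, hsub, bridge_strict hH ι hι hcompat (φ - ψ) ψ hψ0 hd0]
      rw [LSim, map_sub]

end Main

/-- Lemma on asymptotic similarity: let `H` be a Hausdorff field, `Ĥ = L` an immediate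
valued field extension of `H`, `f, g ∈ 𝒞`, `f̂, ĝ ∈ Ĥ` with `f ∼_H f̂` and `g ∼_H ĝ`.
Then `1/f ∼_H 1/f̂` and `f·g ∼_H f̂·ĝ`, and `f ≼ g` in `𝒞` iff `f̂ ≼ ĝ` in `Ĥ`, and
likewise for `≺`, `≍` and `∼`. -/
theorem stmt16 (H : Subring GermR) (hH : IsHausdorffField H)
    {L : Type*} [Field L] (O : Subring L)
    -- O is a valuation subring of L
    (hO : ∀ x : L, x ∈ O ∨ x⁻¹ ∈ O)
    (ι : H →+* L) (hι : Function.Injective ι)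
    -- the valuation of Ĥ = L extends that of H
    (hcompat : ∀ h : H, ι h ∈ O ↔ Dominates (↑h : GermR) 1)
    -- Ĥ is an immediate extension of H
    (himm : ∀ x : L, x ≠ 0 → ∃ h : H, LSim O x (ι h))
    (f g : GermR) (fh gh : L)
    (hf : SimH H O ι f fh) (hg : SimH H O ι g gh) :
    (IsUnit f ∧ ∀ finv : GermR, f * finv = 1 → SimH H O ι finv fh⁻¹) ∧
    SimH H O ι (f * g) (fh * gh) ∧
    (Dominates f g ↔ LPreceq O fh gh) ∧
    (StrictDominates f g ↔ LPrec O fh gh) ∧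
    ((Dominates f g ∧ Dominates g f) ↔ (LPreceq O fh gh ∧ LPreceq O gh fh)) ∧
    (GermSim f g ↔ LSim O fh gh) := by
  have T1 := transfer hH hO ι hι hcompat f g fh gh hf hg
  have T2 := transfer hH hO ι hι hcompat g f gh fh hg hf
  obtain ⟨φ, hfφ, hfL⟩ := hf
  obtain ⟨ψ, hgψ, hgL⟩ := hg
  obtain ⟨F, Φ, hF, hΦ, hr1⟩ := germsim_reps hfφ
  obtain ⟨G, Ψ, hG, hΨ, hr2⟩ := germsim_reps hgψ
  have hFnz : ∀ᶠ t in atTop, F t ≠ 0 := (ratio1_facts hr1).mono fun t ht => ht.1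
  have hφ0 : (↑φ : GermR) ≠ 0 := by
    intro e
    exact (lsim_iff.1 hfL).1 (by rw [show φ = 0 from Subtype.ext e, map_zero])
  refine ⟨⟨?_, ?_⟩, ?_, T1.1, T1.2.1, and_congr T1.1 T2.1, T1.2.2⟩
  · -- IsUnit f
    refine isUnit_iff_exists_inv.2 ⟨↑(fun t => (F t)⁻¹ : ℝ → ℝ), ?_⟩
    rw [hF, ← Germ.coe_mul, ← Germ.coe_one, Germ.coe_eq]
    filter_upwards [hFnz] with t ht
    show F t * (F t)⁻¹ = 1
    exact mul_inv_cancel₀ ht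
  · -- inverse
    intro finv hfinv
    obtain ⟨Fi, hFi⟩ := germ_exists_rep finv
    have hFFi : ∀ᶠ t in atTop, F t * Fi t = 1 :=
      germ_prod_one (by rw [← hF, ← hFi]; exact hfinv)
    obtain ⟨φ', hφφ'⟩ := germ_inv_exists hH φ hφ0
    obtain ⟨Φ', hΦ'⟩ := germ_exists_rep ↑φ'
    have hΦΦ' : ∀ᶠ t in atTop, Φ t * Φ' t = 1 :=
      germ_prod_one (by rw [← hΦ, ← hΦ', ← coeH_mul, hφφ']; rfl)
    refine ⟨φ', ?_, ?_⟩
    · rw [hFi, hΦ', germsim_iff]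
      constructor
      · filter_upwards [hΦΦ'] with t ht
        intro e; rw [e, mul_zero] at ht; exact absurd ht (by norm_num)
      · refine (ratio1_symm hr1).2.congr' ?_
        filter_upwards [hFFi, hΦΦ', hFnz, hr1.1] with t h1 h2 h3 h4
        have hΦ't : Φ' t ≠ 0 := by
          intro e; rw [e, mul_zero] at h2; exact absurd h2 (by norm_num)
        show Φ t / F t = Fi t / Φ' t
        rw [div_eq_div_iff h3 hΦ't]
        linear_combination h2 - h1
    · have he : ι φ' = (ι φ)⁻¹ := by
        have h1 : ι φ * ι φ' = 1 := by rw [← map_mul, hφφ', map_one]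
        exact (inv_eq_of_mul_eq_one_right h1).symm
      rw [he]
      exact lsim_inv hO hfL
  · -- product
    refine ⟨φ * ψ, ?_, ?_⟩
    · rw [show f * g = ↑(fun t => F t * G t : ℝ → ℝ) by
          rw [hF, hG, ← Germ.coe_mul]; rfl,
        show ((φ * ψ : H) : GermR) = ↑(fun t => Φ t * Ψ t : ℝ → ℝ) by
          rw [coeH_mul, hΦ, hΨ, ← Germ.coe_mul]; rfl,
        germsim_iff]
      constructor
      · filter_upwards [hr1.1, hr2.1] with t h1 h2
        exact mul_ne_zero h1 h2
      · have hm := hr1.2.mul hr2.2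
        rw [mul_one] at hm
        refine hm.congr' ?_
        filter_upwards with t
        show F t / Φ t * (G t / Ψ t) = F t * G t / (Φ t * Ψ t)
        rw [div_mul_div_comm]
    · rw [map_mul]
      exact lsim_mul hO hfL hgL
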